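/- For every integer d ≥ 2, the sequence Σ_d := 2^{-2d-1} ∑_{k=1}^{d} 4^k binom(2(d-k), d-k) satisfies 1/2 + (1/2)Σ_{d-1} ≤ Σ_d < 1/2 + Σ_{d-1}. -/

import Mathlib

lemma sumEq : ∀ m : ℕ,
    ∑ k ∈ Finset.Icc 1 (m+1), 4 ^ k * Nat.centralBinom ((m+1) - k)
      = 4 * (2 * m + 1) * Nat.centralBinom m := by
  intro m
  induction m with
  | zero => simp [Nat.centralBinom]
  | succ m ih =>
    rw [← Finset.Ico_add_one_right_eq_Icc, Finset.sum_Ico_eq_sum_range] at ih ⊢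
    simp only [Nat.succ_sub_one, Nat.add_sub_cancel] at ih ⊢
    rw [show m + 1 + 1 = (m + 1) + 1 from rfl, Finset.sum_range_succ']
    have hshift : ∀ i ∈ Finset.range (m+1),
        4 ^ (1 + (i+1)) * Nat.centralBinom (m + 1 + 1 - (1 + (i+1)))
          = 4 * (4 ^ (1 + i) * Nat.centralBinom (m + 1 - (1 + i))) := by
      intro i hi
      have h1 : m + 1 + 1 - (1 + (i+1)) = m + 1 - (1 + i) := by omega
      rw [h1]; ring
    rw [Finset.sum_congr rfl hshift, ← Finset.mul_sum, ih]
    have h1 := Nat.succ_mul_centralBinom_succ m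
    have h2 : m + 1 + 1 - (1 + 0) = m + 1 := by omega
    rw [h2, pow_one]
    nlinarith [h1]

lemma centralBinom_lt_four_pow : ∀ n : ℕ, 1 ≤ n → Nat.centralBinom n < 4 ^ n := by
  intro n hn
  induction n with
  | zero => omega
  | succ n ih =>
    rcases Nat.eq_zero_or_pos n with h | h
    · subst h; decide
    · have IH := ih h
      have h1 := Nat.succ_mul_centralBinom_succ n
      have h2 := Nat.centralBinom_pos n
      have h3 : (n+1) * Nat.centralBinom (n+1) < (n+1) * 4 ^ (n+1) := by
        rw [h1, pow_succ]
        nlinarith [IH, h2]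
      exact Nat.lt_of_mul_lt_mul_left h3

lemma four_pow_le_succ_mul_centralBinom : ∀ n : ℕ, 4 ^ n ≤ (n + 1) * Nat.centralBinom n := by
  intro n
  induction n with
  | zero => decide
  | succ n IH =>
    have h1 := Nat.succ_mul_centralBinom_succ n
    apply Nat.le_of_mul_le_mul_left _ (show 0 < n + 1 by omega)
    calc (n+1) * 4 ^ (n+1) = 4 * (n+1) * 4 ^ n := by ring
      _ ≤ 4 * (n+1) * ((n+1) * Nat.centralBinom n) := Nat.mul_le_mul_left _ IH
      _ ≤ (n+1) * ((n+1+1) * Nat.centralBinom (n+1)) := by nlinarith [h1, Nat.centralBinom_pos n]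


/-- Marginal variance of node `d` in the path model with `ζ = γ = 1`. -/
noncomputable def pathVar (d : ℕ) : ℝ :=
  (∑ k ∈ Finset.Icc 1 d, (4 : ℝ) ^ k * ((2 * (d - k)).choose (d - k) : ℝ)) / 2 ^ (2 * d + 1)

lemma pathVar_succ (m : ℕ) :
    pathVar (m + 1) = ((4 * (2 * m + 1) * Nat.centralBinom m : ℕ) : ℝ) / 2 ^ (2 * m + 3) := by
  unfold pathVar
  have hnum : (∑ k ∈ Finset.Icc 1 (m+1), (4 : ℝ) ^ k * ((2 * ((m+1) - k)).choose ((m+1) - k) : ℝ))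
      = ((∑ k ∈ Finset.Icc 1 (m+1), 4 ^ k * Nat.centralBinom ((m+1) - k) : ℕ) : ℝ) := by
    push_cast [Nat.centralBinom]
    rfl
  rw [hnum, sumEq m]
  norm_num [pow_succ]
  ring

/-- `1/2 + Σ_{d-1}/2 ≤ Σ_d < 1/2 + Σ_{d-1}`. -/
theorem pathVar_bounds (d : ℕ) (hd : 2 ≤ d) :
    1 / 2 + 1 / 2 * pathVar (d - 1) ≤ pathVar d ∧ pathVar d < 1 / 2 + pathVar (d - 1) := by
  obtain ⟨m, rfl⟩ : ∃ m, d = m + 2 := ⟨d - 2, by omega⟩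
  have hd1 : m + 2 - 1 = m + 1 := by omega
  rw [hd1, show m + 2 = (m + 1) + 1 from rfl, pathVar_succ (m+1), pathVar_succ m]
  have hid : ((m : ℝ) + 1) * (Nat.centralBinom (m+1) : ℝ)
      = 2 * (2 * (m : ℝ) + 1) * (Nat.centralBinom m : ℝ) := by
    exact_mod_cast Nat.succ_mul_centralBinom_succ m
  have hA : (Nat.centralBinom (m+1) : ℝ) < 4 ^ (m + 1) := by
    exact_mod_cast centralBinom_lt_four_pow (m+1) (by omega)
  have hA2 : (4 : ℝ) ^ (m + 1) ≤ ((m : ℝ) + 1 + 1) * (Nat.centralBinom (m+1) : ℝ) := by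
    exact_mod_cast four_pow_le_succ_mul_centralBinom (m+1)
  have h4 : (0:ℝ) < 4 ^ (m + 1) := by positivity
  have h44 : (4:ℝ) ^ (m+1) = 2 ^ (2*m+2) := by
    rw [show (4:ℝ) = 2 ^ 2 by norm_num, ← pow_mul]
    ring_nf
  have hpow1 : (2:ℝ) ^ (2*(m+1)+3) = 4 * (2 * 4 ^ (m+1)) := by
    rw [h44, show 2*(m+1)+3 = (2*m+2)+3 by ring, pow_add]
    ring
  have hpow2 : (2:ℝ) ^ (2*m+3) = 2 * 4 ^ (m+1) := by
    rw [h44, show 2*m+3 = (2*m+2)+1 by ring, pow_add]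
    ring
  rw [hpow1, hpow2]
  push_cast
  have e1 : 1/2 + 1/2 * ((4*(2*(m:ℝ)+1)*(Nat.centralBinom m : ℝ)) / (2*4^(m+1)))
      = (2*4^(m+1) + 4*(2*(m:ℝ)+1)*(Nat.centralBinom m : ℝ)) / (4*4^(m+1)) := by
    field_simp
    ring_nf
    try tauto
  have e2 : (4*(2*((m:ℝ)+1)+1)*(Nat.centralBinom (m+1) : ℝ)) / (4*(2*4^(m+1)))
      = (2*(2*(m:ℝ)+3)*(Nat.centralBinom (m+1) : ℝ)) / (4*4^(m+1)) := by
    field_simp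
    ring_nf
    try tauto
  have e3 : 1/2 + (4*(2*(m:ℝ)+1)*(Nat.centralBinom m : ℝ)) / (2*4^(m+1))
      = (2*4^(m+1) + 8*(2*(m:ℝ)+1)*(Nat.centralBinom m : ℝ)) / (4*4^(m+1)) := by
    field_simp
    ring_nf
    try tauto
  constructor
  · rw [e1, e2, div_le_div_iff_of_pos_right (by positivity)]
    linarith [hid, hA2]
  · rw [e3, e2, div_lt_div_iff_of_pos_right (by positivity)]
    linarith [hid, hA]
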